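/- Let A ∈ ℝ^{N×d} satisfy RIP at level ℓ with constant δ_ℓ < 1. Then for every x ∈ ℝ^d with ‖x‖₂ ≤ 1 and ‖x‖₁ ≤ √ℓ, we have ‖Ax‖₂ ≤ 3√(1+δ_ℓ). -/

import Mathlib

open Finset Matrix

noncomputable def l1 {ι : Type*} [Fintype ι] (x : ι → ℝ) : ℝ := ∑ i, |x i|

noncomputable def l2 {ι : Type*} [Fintype ι] (x : ι → ℝ) : ℝ := Real.sqrt (∑ i, (x i) ^ 2)

open scoped Classical in
/-- `x` has at most `m` nonzero entries. -/
def sparse {ι : Type*} [Fintype ι] (m : ℕ) (x : ι → ℝ) : Prop :=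
  (Finset.univ.filter (fun i => x i ≠ 0)).card ≤ m

/-- Restricted Isometry Property at level `m` with constant `δ`. -/
def RIP {N d : ℕ} (A : Matrix (Fin N) (Fin d) ℝ) (m : ℕ) (δ : ℝ) : Prop :=
  ∀ x : Fin d → ℝ, sparse m x →
    (1 - δ) * (l2 x) ^ 2 ≤ (l2 (A.mulVec x)) ^ 2 ∧
    (l2 (A.mulVec x)) ^ 2 ≤ (1 + δ) * (l2 x) ^ 2

/-- Restriction of a vector to the coordinates in `S` (zero elsewhere). -/
def restr {d : ℕ} (S : Finset (Fin d)) (x : Fin d → ℝ) : Fin d → ℝ :=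
  fun i => if i ∈ S then x i else 0

section aux
variable {ι : Type*} [Fintype ι]

lemma l2_nonneg (x : ι → ℝ) : 0 ≤ l2 x := Real.sqrt_nonneg _

lemma l1_nonneg (x : ι → ℝ) : 0 ≤ l1 x := Finset.sum_nonneg fun _ _ => abs_nonneg _

lemma l2_sq (x : ι → ℝ) : (l2 x) ^ 2 = ∑ i, (x i) ^ 2 :=
  Real.sq_sqrt (Finset.sum_nonneg fun _ _ => sq_nonneg _)

lemma l2_eq_norm (x : ι → ℝ) : l2 x = ‖(WithLp.equiv 2 (ι → ℝ)).symm x‖ := by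
  rw [EuclideanSpace.norm_eq]
  simp [l2, Real.norm_eq_abs, sq_abs]

lemma l2_add_le (u v : ι → ℝ) : l2 (u + v) ≤ l2 u + l2 v := by
  simp only [l2_eq_norm]
  exact norm_add_le ((WithLp.equiv 2 (ι → ℝ)).symm u) ((WithLp.equiv 2 (ι → ℝ)).symm v)

lemma l2_le_of_sq_le {x : ι → ℝ} {c : ℝ} (hc : 0 ≤ c) (h : (l2 x) ^ 2 ≤ c ^ 2) :
    l2 x ≤ c := by nlinarith [l2_nonneg x]

end aux

section main
variable {N d L : ℕ}

lemma rip_upper {A : Matrix (Fin N) (Fin d) ℝ} {δ : ℝ} (hδ0 : 0 ≤ δ)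
    (hRIP : RIP A L δ) {y : Fin d → ℝ} (hy : sparse L y) :
    l2 (A.mulVec y) ≤ Real.sqrt (1 + δ) * l2 y := by
  have h1δ : (0:ℝ) ≤ 1 + δ := by linarith
  refine l2_le_of_sq_le (mul_nonneg (Real.sqrt_nonneg _) (l2_nonneg _)) ?_
  rw [mul_pow, Real.sq_sqrt h1δ]
  exact (hRIP y hy).2

lemma sparse_restr (S : Finset (Fin d)) (x : Fin d → ℝ) (hS : S.card ≤ L) :
    sparse L (restr S x) := by
  classical
  refine le_trans (Finset.card_le_card ?_) hS
  intro i hi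
  have hi' := (Finset.mem_filter.1 hi).2
  simp only [restr] at hi'
  by_contra h
  exact hi' (by simp [h])

lemma l2_restr_sq (S : Finset (Fin d)) (x : Fin d → ℝ) :
    (l2 (restr S x)) ^ 2 = ∑ i ∈ S, (x i) ^ 2 := by
  classical
  rw [l2_sq]
  rw [show (∑ i, (restr S x i) ^ 2) = ∑ i, (if i ∈ S then (x i) ^ 2 else 0) from
    Finset.sum_congr rfl (fun i _ => by unfold restr; split <;> simp)]
  rw [Finset.sum_ite_mem, Finset.univ_inter]

lemma l2_restr_le (S : Finset (Fin d)) (x : Fin d → ℝ) :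
    l2 (restr S x) ≤ l2 x := by
  apply Real.sqrt_le_sqrt
  apply Finset.sum_le_sum
  intro i _
  simp only [restr]
  split <;> simp [sq_nonneg]

lemma restr_add_restr_compl (S : Finset (Fin d)) (x : Fin d → ℝ) :
    restr S x + restr Sᶜ x = x := by
  classical
  funext i
  simp only [Pi.add_apply, restr, Finset.mem_compl]
  by_cases h : i ∈ S <;> simp [h]

lemma l1_restr_compl (S : Finset (Fin d)) (x : Fin d → ℝ) :
    l1 (restr Sᶜ x) = l1 x - ∑ i ∈ S, |x i| := by
  classical
  have h : l1 x = ∑ i ∈ S, |x i| + ∑ i ∈ Sᶜ, |x i| := by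
    rw [l1, ← Finset.sum_add_sum_compl S]
  have h2 : l1 (restr Sᶜ x) = ∑ i ∈ Sᶜ, |x i| := by
    rw [l1]
    simp only [restr, apply_ite abs, abs_zero]
    rw [Finset.sum_ite_mem, Finset.univ_inter]
  rw [h2, h]; ring

/-- Existence of a "top L" index set. -/
lemma exists_topL (x : Fin d → ℝ) (hLd : L ≤ d) :
    ∃ S : Finset (Fin d), S.card = L ∧ ∀ i ∉ S, ∀ j ∈ S, |x i| ≤ |x j| := by
  classical
  set σ := Tuple.sort (fun i => -|x i|) with hσ
  have hmono : Monotone ((fun i => -|x i|) ∘ σ) := Tuple.monotone_sort _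
  have hR : ∀ m ∈ Finset.range L, m < d := fun m hm =>
    lt_of_lt_of_le (Finset.mem_range.1 hm) hLd
  refine ⟨((Finset.range L).attachFin hR).image σ, ?_, ?_⟩
  · rw [Finset.card_image_of_injective _ σ.injective, Finset.card_attachFin,
      Finset.card_range]
  · intro i hi j hj
    obtain ⟨m, hm, rfl⟩ := Finset.mem_image.1 hj
    have hm' : (m : ℕ) < L := Finset.mem_range.1 ((Finset.mem_attachFin hR).1 hm)
    set k := σ.symm i with hk
    have hik : i = σ k := by simp [hk]
    have hkL : ¬ (k : ℕ) < L := by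
      intro h
      exact hi (Finset.mem_image.2 ⟨k, (Finset.mem_attachFin hR).2 (Finset.mem_range.2 h),
        (Equiv.apply_symm_apply σ i)⟩)
    have hmk : m ≤ k := by
      rw [Fin.le_def]; omega
    have := hmono hmk
    simp only [Function.comp_apply, neg_le_neg_iff] at this
    rw [hik]
    exact this

/-- The key induction: for `L ≥ 1`,
`‖Ax‖₂ ≤ √(1+δ) (√L ‖x‖_∞ + ‖x‖₁/√L)`. -/
lemma key (A : Matrix (Fin N) (Fin d) ℝ) {δ : ℝ} (hδ0 : 0 ≤ δ)
    (hRIP : RIP A L δ) (hL : 1 ≤ L) :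
    ∀ n : ℕ, ∀ x : Fin d → ℝ, ∀ c : ℝ, 0 ≤ c → (∀ i, |x i| ≤ c) →
      (Finset.univ.filter (fun i => x i ≠ 0)).card ≤ n →
      l2 (A.mulVec x) ≤ Real.sqrt (1 + δ) *
        (Real.sqrt L * c + l1 x / Real.sqrt L) := by
  classical
  have hsqL : (0:ℝ) < Real.sqrt L := Real.sqrt_pos.2 (by exact_mod_cast hL)
  have hsq1δ : (0:ℝ) ≤ Real.sqrt (1 + δ) := Real.sqrt_nonneg _
  -- sparse case, used both in base and step
  have sparse_case : ∀ (x : Fin d → ℝ) (c : ℝ), 0 ≤ c → (∀ i, |x i| ≤ c) →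
      sparse L x →
      l2 (A.mulVec x) ≤ Real.sqrt (1 + δ) *
        (Real.sqrt L * c + l1 x / Real.sqrt L) := by
    intro x c hc hxc hsp
    have h1 : l2 (A.mulVec x) ≤ Real.sqrt (1 + δ) * l2 x := rip_upper hδ0 hRIP hsp
    have h2 : (l2 x) ^ 2 ≤ c * l1 x := by
      rw [l2_sq, l1, Finset.mul_sum]
      apply Finset.sum_le_sum
      intro i _
      calc (x i)^2 = |x i| * |x i| := by rw [pow_two, abs_mul_abs_self]
        _ ≤ c * |x i| := mul_le_mul_of_nonneg_right (hxc i) (abs_nonneg _)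
    have h3 : l2 x ≤ Real.sqrt L * c + l1 x / Real.sqrt L := by
      have hu : 0 ≤ Real.sqrt L * c := mul_nonneg hsqL.le hc
      have hv : 0 ≤ l1 x / Real.sqrt L := div_nonneg (l1_nonneg x) hsqL.le
      have huv : (Real.sqrt L * c) * (l1 x / Real.sqrt L) = c * l1 x := by
        field_simp
      apply l2_le_of_sq_le (by linarith)
      nlinarith [sq_nonneg (Real.sqrt L * c), sq_nonneg (l1 x / Real.sqrt L)]
    calc l2 (A.mulVec x) ≤ Real.sqrt (1 + δ) * l2 x := h1
      _ ≤ _ := mul_le_mul_of_nonneg_left h3 hsq1δ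
  intro n
  induction n with
  | zero => intro x c hc hxc hsupp
            exact sparse_case x c hc hxc (le_trans hsupp (Nat.zero_le L))
  | succ n ih =>
    intro x c hc hxc hsupp
    by_cases hsp : (Finset.univ.filter (fun i => x i ≠ 0)).card ≤ L
    · exact sparse_case x c hc hxc hsp
    push_neg at hsp
    -- support has more than L elements, hence d > L
    have hLd : L ≤ d := by
      have := Finset.card_le_card (Finset.filter_subset (fun i => x i ≠ 0) Finset.univ)
      simp only [Finset.card_univ, Fintype.card_fin] at this
      omega
    obtain ⟨S, hScard, hStop⟩ := exists_topL x hLd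
    set t := restr Sᶜ x with ht
    set s := ∑ i ∈ S, |x i| with hs
    have hs0 : 0 ≤ s := Finset.sum_nonneg fun _ _ => abs_nonneg _
    have hsl1 : s ≤ l1 x := by
      rw [l1, hs]
      exact Finset.sum_le_sum_of_subset_of_nonneg (Finset.subset_univ S)
        (fun _ _ _ => abs_nonneg _)
    -- the new bound for the tail
    set c' := s / L with hc'
    have hc'0 : 0 ≤ c' := div_nonneg hs0 (by positivity)
    have htc' : ∀ i, |t i| ≤ c' := by
      intro i
      by_cases hiS : i ∈ S
      · simp [ht, restr, hiS, hc'0]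
      · have hti : t i = x i := by simp [ht, restr, hiS]
        rw [hti]
        have hle : ∀ j ∈ S, |x i| ≤ |x j| := hStop i hiS
        have : (L : ℝ) * |x i| ≤ s := by
          rw [hs, ← hScard]
          calc (S.card : ℝ) * |x i| = ∑ _j ∈ S, |x i| := by
                rw [Finset.sum_const, nsmul_eq_mul]
            _ ≤ ∑ j ∈ S, |x j| := Finset.sum_le_sum hle
        rw [hc', le_div_iff₀ (by exact_mod_cast hL : (0:ℝ) < L)]
        linarith
    -- support of tail is smaller
    have hsupp_t : (Finset.univ.filter (fun i => t i ≠ 0)).card ≤ n := by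
      have hSne : S.Nonempty := Finset.card_pos.1 (by omega)
      -- find a nonzero coordinate in S
      have hex : ∃ j₀ ∈ S, x j₀ ≠ 0 := by
        have : 0 < (Finset.univ.filter (fun i => x i ≠ 0)).card := by omega
        obtain ⟨i, hi⟩ := Finset.card_pos.1 this
        have hxi : x i ≠ 0 := (Finset.mem_filter.1 hi).2
        by_cases hiS : i ∈ S
        · exact ⟨i, hiS, hxi⟩
        · obtain ⟨j, hj⟩ := hSne
          refine ⟨j, hj, ?_⟩
          have := hStop i hiS j hj
          intro h0
          rw [h0, abs_zero] at this
          exact hxi (abs_eq_zero.1 (le_antisymm this (abs_nonneg _)))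
      obtain ⟨j₀, hj₀S, hxj₀⟩ := hex
      have hsub : (Finset.univ.filter (fun i => t i ≠ 0)) ⊆
          (Finset.univ.filter (fun i => x i ≠ 0)).erase j₀ := by
        intro i hi
        have hti : t i ≠ 0 := (Finset.mem_filter.1 hi).2
        have hiS : i ∉ S := by
          intro hiS
          exact hti (by simp [ht, restr, hiS])
        refine Finset.mem_erase.2 ⟨?_, Finset.mem_filter.2 ⟨Finset.mem_univ _, ?_⟩⟩
        · intro h; exact hiS (h ▸ hj₀S)
        · intro h0; exact hti (by simp [ht, restr, hiS, h0])
      have hj₀mem : j₀ ∈ Finset.univ.filter (fun i => x i ≠ 0) :=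
        Finset.mem_filter.2 ⟨Finset.mem_univ _, hxj₀⟩
      calc (Finset.univ.filter (fun i => t i ≠ 0)).card
          ≤ ((Finset.univ.filter (fun i => x i ≠ 0)).erase j₀).card :=
            Finset.card_le_card hsub
        _ = (Finset.univ.filter (fun i => x i ≠ 0)).card - 1 :=
            Finset.card_erase_of_mem hj₀mem
        _ ≤ n := by omega
    -- apply IH to the tail
    have hIH := ih t c' hc'0 htc' hsupp_t
    -- bound for the sparse head
    have hhead : l2 (A.mulVec (restr S x)) ≤ Real.sqrt (1 + δ) * (Real.sqrt L * c) := by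
      have hsp' : sparse L (restr S x) := sparse_restr S x (le_of_eq hScard)
      have h1 : l2 (A.mulVec (restr S x)) ≤ Real.sqrt (1 + δ) * l2 (restr S x) :=
        rip_upper hδ0 hRIP hsp'
      have h2 : l2 (restr S x) ≤ Real.sqrt L * c := by
        apply l2_le_of_sq_le (mul_nonneg hsqL.le hc)
        rw [l2_restr_sq, mul_pow, Real.sq_sqrt (Nat.cast_nonneg L)]
        calc ∑ i ∈ S, (x i) ^ 2 ≤ ∑ _i ∈ S, c ^ 2 := by
              apply Finset.sum_le_sum
              intro i _
              calc (x i)^2 = |x i|^2 := (sq_abs _).symm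
                _ ≤ c ^ 2 := pow_le_pow_left₀ (abs_nonneg _) (hxc i) 2
          _ = (L:ℝ) * c ^ 2 := by rw [Finset.sum_const, nsmul_eq_mul, hScard]
      calc l2 (A.mulVec (restr S x)) ≤ Real.sqrt (1+δ) * l2 (restr S x) := h1
        _ ≤ _ := mul_le_mul_of_nonneg_left h2 hsq1δ
    -- combine
    have hsplit : A.mulVec x = A.mulVec (restr S x) + A.mulVec t := by
      rw [← Matrix.mulVec_add, ht, restr_add_restr_compl]
    have htri : l2 (A.mulVec x) ≤ l2 (A.mulVec (restr S x)) + l2 (A.mulVec t) := by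
      rw [hsplit]; exact l2_add_le _ _
    have hrr : Real.sqrt L * Real.sqrt L = (L:ℝ) := Real.mul_self_sqrt (Nat.cast_nonneg L)
    have hLne : ((L:ℝ)) ≠ 0 := by positivity
    have hsLc' : Real.sqrt L * c' = s / Real.sqrt L := by
      rw [hc', eq_div_iff hsqL.ne']
      field_simp
      linear_combination s * hrr
    have hl1t : l1 t = l1 x - s := by rw [ht, l1_restr_compl, hs]
    calc l2 (A.mulVec x) ≤ l2 (A.mulVec (restr S x)) + l2 (A.mulVec t) := htri
      _ ≤ Real.sqrt (1+δ) * (Real.sqrt L * c)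
          + Real.sqrt (1+δ) * (Real.sqrt L * c' + l1 t / Real.sqrt L) :=
            add_le_add hhead hIH
      _ = Real.sqrt (1+δ) * (Real.sqrt L * c + l1 x / Real.sqrt L) := by
            rw [hsLc', hl1t]; field_simp; ring

end main

theorem stmt8 {N d L : ℕ} (A : Matrix (Fin N) (Fin d) ℝ) (δ : ℝ)
    (hδ0 : 0 ≤ δ) (hδ1 : δ < 1) (hRIP : RIP A L δ)
    (x : Fin d → ℝ) (h2 : l2 x ≤ 1) (h1 : l1 x ≤ Real.sqrt L) :
    l2 (A.mulVec x) ≤ 3 * Real.sqrt (1 + δ) := by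
  classical
  have hsq1δ : (0:ℝ) ≤ Real.sqrt (1 + δ) := Real.sqrt_nonneg _
  rcases Nat.eq_zero_or_pos L with hL0 | hL
  · -- L = 0 : x must be 0
    subst hL0
    have h0 : l1 x ≤ 0 := by simpa using h1
    have hx0 : x = 0 := by
      funext i
      have hterm : ∀ j ∈ Finset.univ, (0:ℝ) ≤ |x j| := fun _ _ => abs_nonneg _
      have := (Finset.sum_eq_zero_iff_of_nonneg hterm).1
        (le_antisymm h0 (l1_nonneg x)) i (Finset.mem_univ i)
      simpa [abs_eq_zero] using this
    rw [hx0, Matrix.mulVec_zero]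
    have : l2 (0 : Fin N → ℝ) = 0 := by simp [l2]
    rw [this]
    positivity
  · have hsqL : (0:ℝ) < Real.sqrt L := Real.sqrt_pos.2 (by exact_mod_cast hL)
    by_cases hsp : (Finset.univ.filter (fun i => x i ≠ 0)).card ≤ L
    · -- x is already L-sparse
      have := rip_upper hδ0 hRIP hsp
      calc l2 (A.mulVec x) ≤ Real.sqrt (1 + δ) * l2 x := this
        _ ≤ Real.sqrt (1 + δ) * 1 := by
              apply mul_le_mul_of_nonneg_left h2 hsq1δ
        _ ≤ 3 * Real.sqrt (1 + δ) := by linarith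
    push_neg at hsp
    have hLd : L ≤ d := by
      have := Finset.card_le_card (Finset.filter_subset (fun i => x i ≠ 0) Finset.univ)
      simp only [Finset.card_univ, Fintype.card_fin] at this
      omega
    obtain ⟨S, hScard, hStop⟩ := exists_topL x hLd
    set t := restr Sᶜ x with ht
    set s := ∑ i ∈ S, |x i| with hs
    have hs0 : 0 ≤ s := Finset.sum_nonneg fun _ _ => abs_nonneg _
    have hsl1 : s ≤ l1 x := by
      rw [l1, hs]
      exact Finset.sum_le_sum_of_subset_of_nonneg (Finset.subset_univ S)
        (fun _ _ _ => abs_nonneg _)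
    set c' := s / L with hc'
    have hc'0 : 0 ≤ c' := div_nonneg hs0 (by positivity)
    have htc' : ∀ i, |t i| ≤ c' := by
      intro i
      by_cases hiS : i ∈ S
      · simp [ht, restr, hiS, hc'0]
      · have hti : t i = x i := by simp [ht, restr, hiS]
        rw [hti]
        have hle : ∀ j ∈ S, |x i| ≤ |x j| := hStop i hiS
        have : (L : ℝ) * |x i| ≤ s := by
          rw [hs, ← hScard]
          calc (S.card : ℝ) * |x i| = ∑ _j ∈ S, |x i| := by
                rw [Finset.sum_const, nsmul_eq_mul]
            _ ≤ ∑ j ∈ S, |x j| := Finset.sum_le_sum hle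
        rw [hc', le_div_iff₀ (by exact_mod_cast hL : (0:ℝ) < L)]
        linarith
    -- head bound
    have hhead : l2 (A.mulVec (restr S x)) ≤ Real.sqrt (1 + δ) := by
      have hsp' : sparse L (restr S x) := sparse_restr S x (le_of_eq hScard)
      calc l2 (A.mulVec (restr S x)) ≤ Real.sqrt (1 + δ) * l2 (restr S x) :=
            rip_upper hδ0 hRIP hsp'
        _ ≤ Real.sqrt (1 + δ) * 1 :=
            mul_le_mul_of_nonneg_left (le_trans (l2_restr_le S x) h2) hsq1δ
        _ = Real.sqrt (1 + δ) := mul_one _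
    -- tail bound via the key lemma
    have htail := key A hδ0 hRIP hL ((Finset.univ.filter (fun i => t i ≠ 0)).card)
      t c' hc'0 htc' le_rfl
    have hrr : Real.sqrt L * Real.sqrt L = (L:ℝ) := Real.mul_self_sqrt (Nat.cast_nonneg L)
    have hLne : ((L:ℝ)) ≠ 0 := by positivity
    have hsLc' : Real.sqrt L * c' = s / Real.sqrt L := by
      rw [hc', eq_div_iff hsqL.ne']
      field_simp
      linear_combination s * hrr
    have hl1t : l1 t = l1 x - s := by rw [ht, l1_restr_compl, hs]
    have hone : Real.sqrt L * c' ≤ 1 := by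
      rw [hsLc', div_le_one hsqL]
      exact le_trans hsl1 h1
    have htwo : l1 t / Real.sqrt L ≤ 1 := by
      rw [div_le_one hsqL, hl1t]
      linarith
    have htail2 : l2 (A.mulVec t) ≤ Real.sqrt (1 + δ) * 2 := by
      calc l2 (A.mulVec t) ≤ Real.sqrt (1+δ) * (Real.sqrt L * c' + l1 t / Real.sqrt L) := htail
        _ ≤ Real.sqrt (1+δ) * 2 := by
              apply mul_le_mul_of_nonneg_left _ hsq1δ
              linarith
    have hsplit : A.mulVec x = A.mulVec (restr S x) + A.mulVec t := by
      rw [← Matrix.mulVec_add, ht, restr_add_restr_compl]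
    calc l2 (A.mulVec x) ≤ l2 (A.mulVec (restr S x)) + l2 (A.mulVec t) := by
          rw [hsplit]; exact l2_add_le _ _
      _ ≤ Real.sqrt (1 + δ) + Real.sqrt (1 + δ) * 2 := add_le_add hhead htail2
      _ = 3 * Real.sqrt (1 + δ) := by ring
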